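/- arXiv:1908.04358 — 2 statements merged into one kernel-verified Lean document; each statement's English description precedes it below -/
import Mathlib

section
/- Let A be a weighted directed graph on n vertices that is weakly connected, and let S₁, …, S_l be its pairwise distinct minimal source subgraphs. Then the kernel of L, the subspace {x : Fin n → ℝ | L.mulVec x = 0} of ℝⁿ, has dimension l and admits a basis k₁, …, k_l in which each k_m satisfies k_m i > 0 for i ∈ S_m and k_m i = 0 for i ∉ S_m; in particular the k_m are pairwise orthogonal nonnegative vectors. -/
open Matrix BigOperators

noncomputable section

variable {n : ℕ}

/-- Weighted in-degree vector. -/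
def indeg (A : Matrix (Fin n) (Fin n) ℝ) (j : Fin n) : ℝ := ∑ i, A i j

/-- Weighted out-degree vector. -/
def outdeg (A : Matrix (Fin n) (Fin n) ℝ) (i : Fin n) : ℝ := ∑ j, A i j

/-- Weighted in-degree Laplacian `L = diag d - A`. -/
def inLap (A : Matrix (Fin n) (Fin n) ℝ) : Matrix (Fin n) (Fin n) ℝ :=
  Matrix.diagonal (indeg A) - A

/-- Reachability: reflexive-transitive closure of the edge relation. -/
def Reaches (A : Matrix (Fin n) (Fin n) ℝ) : Fin n → Fin n → Prop :=
  Relation.ReflTransGen fun i j => 0 < A i j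

/-- Weak connectivity. -/
def WeaklyConnected (A : Matrix (Fin n) (Fin n) ℝ) : Prop :=
  ∀ i j : Fin n, Relation.ReflTransGen (fun i j => 0 < A i j ∨ 0 < A j i) i j

/-- Strong connectivity. -/
def StronglyConnected (A : Matrix (Fin n) (Fin n) ℝ) : Prop :=
  ∀ i j : Fin n, Reaches A i j

/-- Simply forward influenced graph. -/
def SimplyForwardInfluenced (A : Matrix (Fin n) (Fin n) ℝ) : Prop :=
  (∃ i, indeg A i = 0) ∧ (∃ i, indeg A i ≠ 0) ∧
    ∀ j, indeg A j ≠ 0 → ∃ i, indeg A i = 0 ∧ Reaches A i j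

/-- A set of vertices with no incoming edges from outside. -/
def InClosed (A : Matrix (Fin n) (Fin n) ℝ) (S : Finset (Fin n)) : Prop :=
  ∀ i j : Fin n, i ∉ S → j ∈ S → A i j = 0

/-- Minimal source subgraph. -/
def MinSourceSubgraph (A : Matrix (Fin n) (Fin n) ℝ) (S : Finset (Fin n)) : Prop :=
  S.Nonempty ∧ InClosed A S ∧ ∀ T ⊆ S, T.Nonempty → T ≠ S → ¬ InClosed A T

/-- Total edge weight. -/
def totalWeight (A : Matrix (Fin n) (Fin n) ℝ) : ℝ := ∑ i, ∑ j, A i j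

/-- `g` is a forward hierarchical level vector: a minimizer of `‖Lᵀ x - d‖₂`. -/
def IsFHL (A : Matrix (Fin n) (Fin n) ℝ) (g : Fin n → ℝ) : Prop :=
  ∀ x : Fin n → ℝ,
    ∑ i, ((inLap A)ᵀ.mulVec g i - indeg A i) ^ 2 ≤
      ∑ i, ((inLap A)ᵀ.mulVec x i - indeg A i) ^ 2

/-- Forward democracy coefficient, computed from a forward hierarchical level vector `g`. -/
def etaF (A : Matrix (Fin n) (Fin n) ℝ) (g : Fin n → ℝ) : ℝ :=
  1 - (∑ i, ∑ j, A i j * (g j - g i)) / totalWeight A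

/-- Forward influence centrality of a vertex, from a forward hierarchical level vector `g`. -/
def vF (A : Matrix (Fin n) (Fin n) ℝ) (g : Fin n → ℝ) (i : Fin n) : ℝ :=
  if indeg A i = 0 then 1 else 1 - (∑ k, A k i * (g i - g k)) / indeg A i

/-- `b` is the orthogonal projection of `d` onto `ker L` (standard Euclidean inner product). -/
def IsProjKerL (A : Matrix (Fin n) (Fin n) ℝ) (b : Fin n → ℝ) : Prop :=
  (inLap A).mulVec b = 0 ∧
    ∀ x : Fin n → ℝ, (inLap A).mulVec x = 0 → ∑ i, (indeg A i - b i) * x i = 0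

lemma inLap_mulVec (A : Matrix (Fin n) (Fin n) ℝ) (x : Fin n → ℝ) (i : Fin n) :
    (inLap A).mulVec x i = indeg A i * x i - ∑ j, A i j * x j := by
  simp only [inLap, mulVec, dotProduct, Matrix.sub_apply, sub_mul, Finset.sum_sub_distrib]
  congr 1
  rw [Finset.sum_eq_single i]
  · simp [Matrix.diagonal_apply_eq]
  · intro b _ hb; simp [Matrix.diagonal_apply_ne' _ hb]
  · simp

lemma inLapT_mulVec (A : Matrix (Fin n) (Fin n) ℝ) (y : Fin n → ℝ) (j : Fin n) :
    ((inLap A)ᵀ).mulVec y j = indeg A j * y j - ∑ i, A i j * y i := by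
  simp only [inLap, mulVec, dotProduct, transpose_apply, Matrix.sub_apply, sub_mul,
    Finset.sum_sub_distrib]
  congr 1
  rw [Finset.sum_eq_single j]
  · simp [Matrix.diagonal_apply_eq, mul_comm]
  · intro b _ hb; simp [Matrix.diagonal_apply_ne _ hb]
  · simp

lemma sum_inLap_mulVec (A : Matrix (Fin n) (Fin n) ℝ) (x : Fin n → ℝ) :
    ∑ i, (inLap A).mulVec x i = 0 := by
  simp only [inLap_mulVec, Finset.sum_sub_distrib]
  rw [Finset.sum_comm]
  simp [indeg, Finset.sum_mul]

lemma inClosed_inter {A : Matrix (Fin n) (Fin n) ℝ} {S T : Finset (Fin n)}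
    (hS : InClosed A S) (hT : InClosed A T) : InClosed A (S ∩ T) := by
  intro i j hi hj
  rw [Finset.mem_inter] at hj
  by_cases h : i ∈ S
  · exact hT i j (fun hiT => hi (Finset.mem_inter.mpr ⟨h, hiT⟩)) hj.2
  · exact hS i j h hj.1

lemma exists_min_source {A : Matrix (Fin n) (Fin n) ℝ} {T : Finset (Fin n)}
    (hT : T.Nonempty) (hTc : InClosed A T) : ∃ S, S ⊆ T ∧ MinSourceSubgraph A S := by
  classical
  obtain ⟨S, hSmem, hSmin⟩ := Finset.exists_min_image
    (T.powerset.filter (fun S => S.Nonempty ∧ InClosed A S)) Finset.card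
    ⟨T, by simp [hT, hTc]⟩
  simp only [Finset.mem_filter, Finset.mem_powerset] at hSmem
  refine ⟨S, hSmem.1, hSmem.2.1, hSmem.2.2, ?_⟩
  intro T' hT'S hT'ne hT'neq hT'c
  have hle : S.card ≤ T'.card := hSmin T' (by
    simp only [Finset.mem_filter, Finset.mem_powerset]
    exact ⟨hT'S.trans hSmem.1, hT'ne, hT'c⟩)
  exact hT'neq (Finset.eq_of_subset_of_card_le hT'S hle)

lemma exists_ker_vec {A : Matrix (Fin n) (Fin n) ℝ} (hA : ∀ i j, 0 ≤ A i j)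
    {S : Finset (Fin n)} (hS : MinSourceSubgraph A S) :
    ∃ k : Fin n → ℝ, (inLap A).mulVec k = 0 ∧ (∀ i ∈ S, 0 < k i) ∧ (∀ i ∉ S, k i = 0) := by
  classical
  obtain ⟨hSne, hScl, hSmin⟩ := hS
  -- in-degree restricted to S
  have hd : ∀ j ∈ S, ∑ i ∈ S, A i j = indeg A j := by
    intro j hj
    exact Finset.sum_subset (Finset.subset_univ S)
      (fun i _ hi => hScl i j hi hj)
  -- the submatrix
  set B : Matrix ↥S ↥S ℝ := fun i j => inLap A i.1 j.1 with hB
  have hSne' : Nonempty ↥S := ⟨⟨hSne.choose, hSne.choose_spec⟩⟩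
  have hcol : Bᵀ.mulVec 1 = 0 := by
    funext j
    have : ∑ i : ↥S, inLap A i.1 j.1 = 0 := by
      rw [Finset.sum_coe_sort S (fun i => inLap A i j.1)]
      have : ∑ i ∈ S, inLap A i j.1
          = (∑ i ∈ S, Matrix.diagonal (indeg A) i j.1) - ∑ i ∈ S, A i j.1 := by
        simp [inLap, Finset.sum_sub_distrib]
      rw [this, hd j.1 j.2]
      have : ∑ i ∈ S, Matrix.diagonal (indeg A) i j.1 = indeg A j.1 := by
        rw [Finset.sum_eq_single j.1]
        · simp
        · intro b _ hb; simp [Matrix.diagonal_apply_ne _ hb]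
        · intro h; exact absurd j.2 h
      rw [this]; ring
    simpa [mulVec, dotProduct, transpose_apply] using this
  have hdet : B.det = 0 := by
    rw [← Matrix.det_transpose]
    exact Matrix.exists_mulVec_eq_zero_iff.mp ⟨1, fun h => one_ne_zero (congrFun h hSne'.some), hcol⟩
  obtain ⟨v, hv0, hv⟩ := Matrix.exists_mulVec_eq_zero_iff.mpr hdet
  -- extend v by zero
  set x : Fin n → ℝ := fun i => if h : i ∈ S then v ⟨i, h⟩ else 0 with hx
  have hxS : ∀ (i : ↥S), x i.1 = v i := by
    intro i; simp [hx, i.2]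
  have hx0 : ∀ i ∉ S, x i = 0 := by intro i hi; simp [hx, hi]
  have hrow : ∀ i : Fin n, ∑ j, inLap A i j * x j = ∑ j ∈ S, inLap A i j * x j := by
    intro i
    exact (Finset.sum_subset (Finset.subset_univ S)
      (fun j _ hj => by rw [hx0 j hj, mul_zero])).symm
  have hLx : (inLap A).mulVec x = 0 := by
    funext i
    show ∑ j, inLap A i j * x j = 0
    rw [hrow i, ← Finset.sum_coe_sort S (fun j => inLap A i j * x j)]
    by_cases hi : i ∈ S
    · have : ∑ j : ↥S, inLap A i j.1 * x j.1 = B.mulVec v ⟨i, hi⟩ := by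
        simp only [mulVec, dotProduct, hB]
        exact Finset.sum_congr rfl (fun j _ => by rw [hxS j])
      rw [this, hv]; rfl
    · apply Finset.sum_eq_zero
      intro j _
      have h1 : A i j.1 = 0 := hScl i j.1 hi j.2
      have h2 : Matrix.diagonal (indeg A) i j.1 = 0 :=
        Matrix.diagonal_apply_ne _ (fun h => hi (h ▸ j.2))
      simp [inLap, h1, h2]
  have hxne : x ≠ 0 := by
    intro h
    apply hv0
    funext j
    have := congrFun h j.1
    rw [hxS j] at this
    exact this
  -- now the absolute value
  set k : Fin n → ℝ := fun i => |x i| with hk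
  have hk0 : ∀ i ∉ S, k i = 0 := fun i hi => by simp [hk, hx0 i hi]
  have hd0 : ∀ i, 0 ≤ indeg A i := fun i => Finset.sum_nonneg (fun j _ => hA j i)
  have heq : ∀ i, indeg A i * x i = ∑ j, A i j * x j := by
    intro i
    have h := congrFun hLx i
    rw [inLap_mulVec] at h
    simp only [Pi.zero_apply] at h
    linarith
  have hnonpos : ∀ i, (inLap A).mulVec k i ≤ 0 := by
    intro i
    rw [inLap_mulVec]
    have h1 : indeg A i * k i = |indeg A i * x i| := by
      rw [abs_mul, abs_of_nonneg (hd0 i)]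
    have h2 : |∑ j, A i j * x j| ≤ ∑ j, A i j * k j := by
      refine (Finset.abs_sum_le_sum_abs _ _).trans ?_
      apply Finset.sum_le_sum
      intro j _
      rw [abs_mul]
      rw [abs_of_nonneg (hA i j)]
    rw [h1, heq i]
    linarith
  have hLk : (inLap A).mulVec k = 0 := by
    have hs := sum_inLap_mulVec A k
    have hall0 := (Finset.sum_eq_zero_iff_of_nonpos (fun i _ => hnonpos i)).mp hs
    funext i
    simpa using hall0 i (Finset.mem_univ i)
  set P := S.filter (fun i => x i ≠ 0) with hP
  have hPsub : P ⊆ S := Finset.filter_subset _ _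
  have hPne : P.Nonempty := by
    have hex : ∃ i, x i ≠ 0 := by
      by_contra h; push_neg at h; exact hxne (funext h)
    obtain ⟨i, hi⟩ := hex
    have hiS : i ∈ S := by by_contra h; exact hi (hx0 i h)
    exact ⟨i, Finset.mem_filter.mpr ⟨hiS, hi⟩⟩
  have hPcl : InClosed A P := by
    intro i j hi hj
    obtain ⟨hjS, hjx⟩ := Finset.mem_filter.mp hj
    by_cases hiS : i ∈ S
    · have hxi : x i = 0 := by
        by_contra h; exact hi (Finset.mem_filter.mpr ⟨hiS, h⟩)
      have h0 : ∑ j', A i j' * k j' = 0 := by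
        have h := congrFun hLk i
        rw [inLap_mulVec] at h
        simp only [Pi.zero_apply] at h
        have hki : k i = 0 := by simp [hk, hxi]
        rw [hki, mul_zero] at h
        linarith
      have h1 := (Finset.sum_eq_zero_iff_of_nonneg
        (fun j' _ => mul_nonneg (hA i j') (abs_nonneg _))).mp h0 j (Finset.mem_univ j)
      rcases mul_eq_zero.mp h1 with h | h
      · exact h
      · exact absurd (abs_eq_zero.mp h) hjx
    · exact hScl i j hiS hjS
  have hPS : P = S := by
    by_contra h
    exact hSmin P hPsub hPne h hPcl
  refine ⟨k, hLk, ?_, hk0⟩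
  intro i hiS
  have hiP : i ∈ P := by rw [hPS]; exact hiS
  have hxi : x i ≠ 0 := (Finset.mem_filter.mp hiP).2
  exact abs_pos.mpr hxi

lemma kerT_nonpos {A : Matrix (Fin n) (Fin n) ℝ} (hn : 0 < n) (hA : ∀ i j, 0 ≤ A i j)
    {l : ℕ} {S : Fin l → Finset (Fin n)}
    (hall : ∀ T : Finset (Fin n), MinSourceSubgraph A T ↔ ∃ m, T = S m)
    {pt : Fin l → Fin n} (hpt : ∀ m, pt m ∈ S m)
    {y : Fin n → ℝ} (hy : ((inLap A)ᵀ).mulVec y = 0) (hz : ∀ m, y (pt m) = 0) :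
    ∀ i, y i ≤ 0 := by
  classical
  obtain ⟨j0, -, hj0⟩ := Finset.exists_max_image Finset.univ y
    ⟨⟨0, hn⟩, Finset.mem_univ _⟩
  set c := y j0 with hc'
  by_contra h
  push_neg at h
  obtain ⟨i0, hi0⟩ := h
  have hc : 0 < c := lt_of_lt_of_le hi0 (hj0 i0 (Finset.mem_univ _))
  set M := Finset.univ.filter (fun j => y j = c) with hM
  have hMne : M.Nonempty := ⟨j0, by simp [hM, hc']⟩
  have hMcl : InClosed A M := by
    intro i j hiM hjM
    have hjc : y j = c := (Finset.mem_filter.mp hjM).2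
    have heq : indeg A j * y j = ∑ i', A i' j * y i' := by
      have h := congrFun hy j
      rw [inLapT_mulVec] at h
      simp only [Pi.zero_apply] at h
      linarith
    have hsum : ∑ i', A i' j * (c - y i') = 0 := by
      have h2 : ∑ i', A i' j * c = indeg A j * c := by
        rw [indeg, Finset.sum_mul]
      have h3 : ∑ i', A i' j * (c - y i')
          = ∑ i', A i' j * c - ∑ i', A i' j * y i' := by
        simp [mul_sub, Finset.sum_sub_distrib]
      rw [h3, h2, ← heq, hjc]
      ring
    have h4 := (Finset.sum_eq_zero_iff_of_nonneg
      (fun i' _ => mul_nonneg (hA i' j)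
        (sub_nonneg.mpr (hj0 i' (Finset.mem_univ _))))).mp hsum i (Finset.mem_univ i)
    rcases mul_eq_zero.mp h4 with h | h
    · exact h
    · exfalso
      apply hiM
      simp only [hM, Finset.mem_filter, Finset.mem_univ, true_and]
      linarith [sub_eq_zero.mp h]
  obtain ⟨S', hS'M, hS'⟩ := exists_min_source hMne hMcl
  obtain ⟨m, rfl⟩ := (hall S').mp hS'
  have hym : y (pt m) = c := (Finset.mem_filter.mp (hS'M (hpt m))).2
  rw [hz m] at hym
  linarith

lemma kerT_eval_zero {A : Matrix (Fin n) (Fin n) ℝ} (hn : 0 < n) (hA : ∀ i j, 0 ≤ A i j)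
    {l : ℕ} {S : Fin l → Finset (Fin n)}
    (hall : ∀ T : Finset (Fin n), MinSourceSubgraph A T ↔ ∃ m, T = S m)
    {pt : Fin l → Fin n} (hpt : ∀ m, pt m ∈ S m)
    {y : Fin n → ℝ} (hy : ((inLap A)ᵀ).mulVec y = 0) (hz : ∀ m, y (pt m) = 0) :
    y = 0 := by
  have h1 := kerT_nonpos hn hA hall hpt hy hz
  have hy' : ((inLap A)ᵀ).mulVec (-y) = 0 := by
    rw [Matrix.mulVec_neg, hy, neg_zero]
  have hz' : ∀ m, (-y) (pt m) = 0 := fun m => by simp [hz m]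
  have h2 := kerT_nonpos hn hA hall hpt hy' hz'
  funext i
  have := h2 i
  simp only [Pi.neg_apply, neg_nonpos] at this
  exact le_antisymm (h1 i) this

theorem stmt_9' (hn : 0 < n) (A : Matrix (Fin n) (Fin n) ℝ)
    (hA : ∀ i j, 0 ≤ A i j)
    (l : ℕ) (S : Fin l → Finset (Fin n)) (hinj : Function.Injective S)
    (hall : ∀ T : Finset (Fin n), MinSourceSubgraph A T ↔ ∃ m, T = S m) :
    Module.finrank ℝ (LinearMap.ker (Matrix.mulVecLin (inLap A))) = l ∧
    ∃ k : Fin l → (Fin n → ℝ),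
      (∀ m, (inLap A).mulVec (k m) = 0) ∧
      (∀ m, ∀ i ∈ S m, 0 < k m i) ∧
      (∀ m, ∀ i ∉ S m, k m i = 0) ∧
      LinearIndependent ℝ k ∧
      Submodule.span ℝ (Set.range k) = LinearMap.ker (Matrix.mulVecLin (inLap A)) := by
  classical
  have hms : ∀ m, MinSourceSubgraph A (S m) := fun m => (hall _).mpr ⟨m, rfl⟩
  choose k hk1 hk2 hk3 using fun m => exists_ker_vec hA (hms m)
  set pt : Fin l → Fin n := fun m => (hms m).1.choose with hptdef
  have hpt : ∀ m, pt m ∈ S m := fun m => (hms m).1.choose_spec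
  have hdisj : ∀ m m', m ≠ m' → ∀ i, i ∈ S m → i ∉ S m' := by
    intro m m' hne i him him'
    apply hne
    apply hinj
    have hint : (S m ∩ S m').Nonempty := ⟨i, Finset.mem_inter.mpr ⟨him, him'⟩⟩
    have hcl := inClosed_inter (hms m).2.1 (hms m').2.1
    have h1 : S m ∩ S m' = S m := by
      by_contra h
      exact (hms m).2.2 _ Finset.inter_subset_left hint h hcl
    have h2 : S m ∩ S m' = S m' := by
      by_contra h
      exact (hms m').2.2 _ Finset.inter_subset_right hint h hcl
    rw [← h1, h2]
  have hkmem : ∀ m, k m ∈ LinearMap.ker (Matrix.mulVecLin (inLap A)) := by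
    intro m
    rw [LinearMap.mem_ker, Matrix.mulVecLin_apply]
    exact hk1 m
  have hind : LinearIndependent ℝ k := by
    rw [Fintype.linearIndependent_iff]
    intro g hg m0
    have h := congrFun hg (pt m0)
    simp only [Finset.sum_apply, Pi.smul_apply, smul_eq_mul, Pi.zero_apply] at h
    rw [Finset.sum_eq_single m0] at h
    · rcases mul_eq_zero.mp h with h' | h'
      · exact h'
      · exact absurd h' (ne_of_gt (hk2 m0 (pt m0) (hpt m0)))
    · intro m _ hm
      rw [hk3 m (pt m0) (hdisj m0 m (fun e => hm e.symm) _ (hpt m0)), mul_zero]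
    · intro h'; exact absurd (Finset.mem_univ m0) h'
  have hge : l ≤ Module.finrank ℝ (LinearMap.ker (Matrix.mulVecLin (inLap A))) := by
    have hind' : LinearIndependent ℝ
        (fun m => (⟨k m, hkmem m⟩ : LinearMap.ker (Matrix.mulVecLin (inLap A)))) := by
      apply LinearIndependent.of_comp (Submodule.subtype _)
      exact hind
    simpa using hind'.fintype_card_le_finrank
  have hle : Module.finrank ℝ (LinearMap.ker (Matrix.mulVecLin (inLap A))) ≤ l := by
    have hker_eq : Module.finrank ℝ (LinearMap.ker (Matrix.mulVecLin (inLap A)))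
        = Module.finrank ℝ (LinearMap.ker (Matrix.mulVecLin (inLap A)ᵀ)) := by
      have h1 := LinearMap.finrank_range_add_finrank_ker (Matrix.mulVecLin (inLap A))
      have h2 := LinearMap.finrank_range_add_finrank_ker (Matrix.mulVecLin (inLap A)ᵀ)
      have h3 : ((inLap A)ᵀ).rank = (inLap A).rank := Matrix.rank_transpose _
      simp only [Module.finrank_pi, Fintype.card_fin] at h1 h2
      unfold Matrix.rank at h3
      omega
    rw [hker_eq]
    set Φ : LinearMap.ker (Matrix.mulVecLin (inLap A)ᵀ) →ₗ[ℝ] (Fin l → ℝ) :=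
      (LinearMap.pi (fun m => LinearMap.proj (pt m))).comp (Submodule.subtype _) with hΦdef
    have hΦ : Function.Injective Φ := by
      rw [← LinearMap.ker_eq_bot]
      rw [LinearMap.ker_eq_bot']
      intro y hy
      have hzz : ∀ m, (y : Fin n → ℝ) (pt m) = 0 := fun m => congrFun hy m
      have hyk : ((inLap A)ᵀ).mulVec (y : Fin n → ℝ) = 0 := by
        have := y.2
        rwa [LinearMap.mem_ker, Matrix.mulVecLin_apply] at this
      exact Subtype.ext (kerT_eval_zero hn hA hall hpt hyk hzz)
    calc Module.finrank ℝ (LinearMap.ker (Matrix.mulVecLin (inLap A)ᵀ))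
        ≤ Module.finrank ℝ (Fin l → ℝ) := LinearMap.finrank_le_finrank_of_injective hΦ
      _ = l := by simp
  have hdim := le_antisymm hle hge
  have hspan_le : Submodule.span ℝ (Set.range k) ≤ LinearMap.ker (Matrix.mulVecLin (inLap A)) := by
    rw [Submodule.span_le]
    rintro - ⟨m, rfl⟩
    exact hkmem m
  have hspan : Submodule.span ℝ (Set.range k) = LinearMap.ker (Matrix.mulVecLin (inLap A)) := by
    apply Submodule.eq_of_le_of_finrank_le hspan_le
    rw [hdim, finrank_span_eq_card hind]
    simp
  exact ⟨hdim, k, hk1, hk2, hk3, hind, hspan⟩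

theorem stmt_9 (hn : 0 < n) (A : Matrix (Fin n) (Fin n) ℝ)
    (hA : ∀ i j, 0 ≤ A i j) (hdiag : ∀ i, A i i = 0)
    (hwc : WeaklyConnected A)
    (l : ℕ) (S : Fin l → Finset (Fin n)) (hinj : Function.Injective S)
    (hall : ∀ T : Finset (Fin n), MinSourceSubgraph A T ↔ ∃ m, T = S m) :
    Module.finrank ℝ (LinearMap.ker (Matrix.mulVecLin (inLap A))) = l ∧
    ∃ k : Fin l → (Fin n → ℝ),
      (∀ m, (inLap A).mulVec (k m) = 0) ∧
      (∀ m, ∀ i ∈ S m, 0 < k m i) ∧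
      (∀ m, ∀ i ∉ S m, k m i = 0) ∧
      LinearIndependent ℝ k ∧
      Submodule.span ℝ (Set.range k) = LinearMap.ker (Matrix.mulVecLin (inLap A)) := by
  exact stmt_9' hn A hA l S hinj hall
end
end

section
/- Let A be a weighted directed graph on n vertices that is weakly connected with total edge weight W = ∑ i, ∑ j, A i j > 0. Then there exists a vertex i with v_f(i) > 0 and v_b(i) > 0 if and only if A is strongly connected. -/
open Matrix BigOperators

noncomputable section

variable {n : ℕ}

section Stmt17Aux

lemma indeg_nonneg' (A : Matrix (Fin n) (Fin n) ℝ) (hA : ∀ i j, 0 ≤ A i j) (i : Fin n) :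
    0 ≤ indeg A i := Finset.sum_nonneg fun j _ => hA j i

lemma mulVec_inLap (A : Matrix (Fin n) (Fin n) ℝ) (w : Fin n → ℝ) (i : Fin n) :
    (inLap A).mulVec w i = indeg A i * w i - ∑ j, A i j * w j := by
  simp [inLap, Matrix.mulVec, dotProduct, Matrix.sub_apply, Matrix.diagonal_apply,
    sub_mul, Finset.sum_sub_distrib, ite_mul, Finset.sum_ite_eq]

lemma mulVec_inLapT (A : Matrix (Fin n) (Fin n) ℝ) (g : Fin n → ℝ) (i : Fin n) :
    (inLap A)ᵀ.mulVec g i = indeg A i * g i - ∑ j, A j i * g j := by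
  simp [inLap, Matrix.mulVec, dotProduct, Matrix.transpose_apply, Matrix.sub_apply,
    Matrix.diagonal_apply, sub_mul, Finset.sum_sub_distrib, ite_mul, Finset.sum_ite_eq]

lemma pairing (B : Matrix (Fin n) (Fin n) ℝ) (z u : Fin n → ℝ) :
    ∑ i, Bᵀ.mulVec z i * u i = ∑ j, z j * B.mulVec u j := by
  simp only [Matrix.mulVec, dotProduct, Matrix.transpose_apply, Finset.sum_mul,
    Finset.mul_sum]
  rw [Finset.sum_comm]
  exact Finset.sum_congr rfl fun j _ => Finset.sum_congr rfl fun i _ => by ring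

lemma ker_resid (B : Matrix (Fin n) (Fin n) ℝ) (g : Fin n → ℝ) (hg : IsFHL B g) :
    (inLap B).mulVec (fun i => indeg B i - (inLap B)ᵀ.mulVec g i) = 0 := by
  set L := inLap B with hL
  set d := indeg B with hd
  set u : Fin n → ℝ := fun i => Lᵀ.mulVec g i - d i with hu
  set z : Fin n → ℝ := L.mulVec u with hz
  set Bv : ℝ := ∑ j, z j ^ 2 with hBv
  set C : ℝ := ∑ i, (Lᵀ.mulVec z i) ^ 2 with hC
  have hBnn : 0 ≤ Bv := Finset.sum_nonneg fun j _ => sq_nonneg _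
  have hCnn : 0 ≤ C := Finset.sum_nonneg fun j _ => sq_nonneg _
  have hq : ∀ t : ℝ, 0 ≤ 2 * t * Bv + t ^ 2 * C := by
    intro t
    have h1 := hg (g + t • z)
    have hMz : ∀ i, Lᵀ.mulVec (g + t • z) i - d i = u i + t * Lᵀ.mulVec z i := by
      intro i
      rw [Matrix.mulVec_add, Matrix.mulVec_smul]
      simp [hu]
      ring
    have expand : ∑ i, (Lᵀ.mulVec (g + t • z) i - d i) ^ 2
        = ∑ i, u i ^ 2 + (2 * t * (∑ i, Lᵀ.mulVec z i * u i) + t ^ 2 * C) := by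
      simp only [hMz, hC, Finset.mul_sum, ← Finset.sum_add_distrib]
      exact Finset.sum_congr rfl fun i _ => by ring
    have hBeq : ∑ i, Lᵀ.mulVec z i * u i = Bv := by
      rw [pairing, hBv]
      exact Finset.sum_congr rfl fun j _ => by rw [hz]; ring
    rw [expand, hBeq] at h1
    have h2 : ∑ i, u i ^ 2 = ∑ i, (Lᵀ.mulVec g i - d i) ^ 2 := rfl
    linarith [h1, h2.le]
  have hC1 : (0:ℝ) < C + 1 := by linarith
  have h := hq (-(Bv / (C + 1)))
  have hBv0 : Bv = 0 := by
    have h3 : 2 * (-(Bv / (C + 1))) * Bv + (-(Bv / (C + 1))) ^ 2 * C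
        = (-2 * Bv ^ 2 * (C + 1) + Bv ^ 2 * C) / (C + 1) ^ 2 := by
      field_simp
    rw [h3] at h
    have h4 : 0 ≤ -2 * Bv ^ 2 * (C + 1) + Bv ^ 2 * C := by
      rcases div_nonneg_iff.mp h with ⟨h5, _⟩ | ⟨_, h6⟩
      · exact h5
      · nlinarith
    nlinarith
  have hzz : z = 0 := by
    funext j
    have h5 := (Finset.sum_eq_zero_iff_of_nonneg (fun j _ => sq_nonneg (z j))).mp
      (hBv.symm.trans hBv0) j (Finset.mem_univ j)
    exact pow_eq_zero_iff (two_ne_zero) |>.mp h5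
  have hneg : (fun i => d i - Lᵀ.mulVec g i) = -u := by
    funext i; simp [hu]
  rw [hneg, Matrix.mulVec_neg, ← hz, hzz, neg_zero]

lemma orth_resid (B : Matrix (Fin n) (Fin n) ℝ) (g x : Fin n → ℝ)
    (hx : (inLap B).mulVec x = 0) :
    ∑ i, (inLap B)ᵀ.mulVec g i * x i = 0 := by
  rw [pairing, hx]
  simp

lemma ker_abs (B : Matrix (Fin n) (Fin n) ℝ) (hB : ∀ i j, 0 ≤ B i j) (w : Fin n → ℝ)
    (hw : (inLap B).mulVec w = 0) :
    (inLap B).mulVec (fun i => |w i|) = 0 := by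
  have heq : ∀ i, indeg B i * w i = ∑ j, B i j * w j := by
    intro i
    have h0 := congrFun hw i
    rw [mulVec_inLap] at h0
    simp only [Pi.zero_apply] at h0
    linarith
  have hle : ∀ i, indeg B i * |w i| ≤ ∑ j, B i j * |w j| := by
    intro i
    calc indeg B i * |w i| = |indeg B i * w i| := by
          rw [abs_mul, abs_of_nonneg (indeg_nonneg' B hB i)]
      _ = |∑ j, B i j * w j| := by rw [heq]
      _ ≤ ∑ j, |B i j * w j| := Finset.abs_sum_le_sum_abs _ _
      _ = ∑ j, B i j * |w j| := Finset.sum_congr rfl fun j _ => by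
          rw [abs_mul, abs_of_nonneg (hB i j)]
  have hsum : ∑ i, (∑ j, B i j * |w j| - indeg B i * |w i|) = 0 := by
    rw [Finset.sum_sub_distrib]
    have h1 : ∑ i, ∑ j, B i j * |w j| = ∑ j, indeg B j * |w j| := by
      rw [Finset.sum_comm]
      exact Finset.sum_congr rfl fun j _ => by rw [indeg, Finset.sum_mul]
    rw [h1, sub_self]
  have hterm := (Finset.sum_eq_zero_iff_of_nonneg
    (fun i _ => sub_nonneg.mpr (hle i))).mp hsum
  funext i
  rw [mulVec_inLap]
  have := hterm i (Finset.mem_univ i)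
  simp only [Pi.zero_apply]
  linarith

lemma resid_nonneg (B : Matrix (Fin n) (Fin n) ℝ) (hB : ∀ i j, 0 ≤ B i j)
    (g : Fin n → ℝ) (hg : IsFHL B g) (i : Fin n) :
    0 ≤ indeg B i - (inLap B)ᵀ.mulVec g i := by
  set r : Fin n → ℝ := fun m => indeg B m - (inLap B)ᵀ.mulVec g m with hr
  have hker : (inLap B).mulVec r = 0 := ker_resid B g hg
  have habs : (inLap B).mulVec (fun m => |r m|) = 0 := ker_abs B hB r hker
  have h1 : ∑ m, (inLap B)ᵀ.mulVec g m * r m = 0 := orth_resid B g r hker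
  have h2 : ∑ m, (inLap B)ᵀ.mulVec g m * |r m| = 0 := orth_resid B g _ habs
  have h1' : ∑ m, (indeg B m - r m) * r m = 0 := by
    rw [← h1]; exact Finset.sum_congr rfl fun m _ => by rw [hr]; ring_nf
  have h2' : ∑ m, (indeg B m - r m) * |r m| = 0 := by
    rw [← h2]; exact Finset.sum_congr rfl fun m _ => by rw [hr]; ring_nf
  set f : Fin n → ℝ := fun m => (indeg B m - r m) * (|r m| - r m) with hf
  have hsumf : ∑ m, f m = 0 := by
    have he : ∀ m, f m = (indeg B m - r m) * |r m| - (indeg B m - r m) * r m :=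
      fun m => by rw [hf]; ring
    rw [Finset.sum_congr rfl (fun m _ => he m), Finset.sum_sub_distrib, h2', h1', sub_zero]
  have hfnn : ∀ m, 0 ≤ f m := by
    intro m
    have h3 : 0 ≤ indeg B m * (|r m| - r m) :=
      mul_nonneg (indeg_nonneg' B hB m) (by linarith [le_abs_self (r m)])
    have h4 : r m * |r m| ≤ r m ^ 2 := by
      nlinarith [le_abs_self (r m), abs_nonneg (r m), sq_abs (r m)]
    have h5 : f m = indeg B m * (|r m| - r m) + (r m ^ 2 - r m * |r m|) := by rw [hf]; ring
    linarith
  have hf0 : f i = 0 :=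
    (Finset.sum_eq_zero_iff_of_nonneg (fun m _ => hfnn m)).mp hsumf i (Finset.mem_univ i)
  rcases le_or_gt 0 (r i) with h | h
  · exact h
  · exfalso
    have habsi : |r i| = -r i := abs_of_neg h
    simp only [hf] at hf0
    rw [habsi] at hf0
    nlinarith [indeg_nonneg' B hB i]

lemma ker_pos_step (B : Matrix (Fin n) (Fin n) ℝ) (hB : ∀ i j, 0 ≤ B i j)
    (w : Fin n → ℝ) (hw0 : ∀ i, 0 ≤ w i) (hker : (inLap B).mulVec w = 0)
    {j k : Fin n} (hjk : 0 < B j k) (hk : 0 < w k) : 0 < w j := by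
  have h0 := congrFun hker j
  rw [mulVec_inLap] at h0
  simp only [Pi.zero_apply] at h0
  have hge : B j k * w k ≤ ∑ m, B j m * w m :=
    Finset.single_le_sum (f := fun m => B j m * w m)
      (fun m _ => mul_nonneg (hB j m) (hw0 m)) (Finset.mem_univ k)
  have hpos : 0 < indeg B j * w j := by
    have := mul_pos hjk hk
    linarith
  by_contra hcon
  push_neg at hcon
  nlinarith [indeg_nonneg' B hB j, hw0 j]

lemma ker_circulation (B : Matrix (Fin n) (Fin n) ℝ) (hB : ∀ i j, 0 ≤ B i j)
    (w : Fin n → ℝ) (hw0 : ∀ i, 0 ≤ w i) (hker : (inLap B).mulVec w = 0)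
    {j k : Fin n} (hjk : 0 < B j k) (hk : 0 < w k) :
    Relation.ReflTransGen (fun a b => 0 < B a b) k j := by
  classical
  set S : Finset (Fin n) :=
    Finset.univ.filter (fun m => Relation.ReflTransGen (fun a b => 0 < B a b ∧ 0 < w b) k m)
    with hS
  have hmem : ∀ m, m ∈ S ↔ Relation.ReflTransGen (fun a b => 0 < B a b ∧ 0 < w b) k m := by
    intro m; simp [hS]
  have hkS : k ∈ S := (hmem k).mpr .refl
  have hbal : ∀ m, ∑ p, B p m * w m = ∑ p, B m p * w p := by
    intro m
    have h0 := congrFun hker m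
    rw [mulVec_inLap] at h0
    simp only [Pi.zero_apply] at h0
    have h2 : (∑ p, B p m) * w m = indeg B m * w m := rfl
    rw [← Finset.sum_mul]
    linarith
  have hmain : ∑ m ∈ S, ∑ p, B p m * w m = ∑ m ∈ S, ∑ p, B m p * w p :=
    Finset.sum_congr rfl fun m _ => hbal m
  have hsplit : ∀ F : Fin n → Fin n → ℝ,
      ∑ m ∈ S, ∑ p, F m p = ∑ m ∈ S, ∑ p ∈ S, F m p + ∑ m ∈ S, ∑ p ∈ Sᶜ, F m p := by
    intro F
    rw [← Finset.sum_add_distrib]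
    exact Finset.sum_congr rfl fun m _ => (Finset.sum_add_sum_compl S _).symm
  have hdiagS : ∑ m ∈ S, ∑ p ∈ S, B p m * w m = ∑ m ∈ S, ∑ p ∈ S, B m p * w p :=
    Finset.sum_comm
  have hout0 : ∑ m ∈ S, ∑ p ∈ Sᶜ, B m p * w p = 0 := by
    apply Finset.sum_eq_zero
    intro m hm
    apply Finset.sum_eq_zero
    intro p hp
    rcases (mul_nonneg (hB m p) (hw0 p)).eq_or_lt with h | h
    · exact h.symm
    · exfalso
      have hBp : 0 < B m p := by
        rcases mul_pos_iff.mp h with ⟨h1, _⟩ | ⟨h1, h2⟩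
        · exact h1
        · exact absurd h2 (not_lt.mpr (hw0 p))
      have hwp : 0 < w p := by
        rcases mul_pos_iff.mp h with ⟨_, h2⟩ | ⟨h1, _⟩
        · exact h2
        · exact absurd h1 (not_lt.mpr (hB m p))
      have : p ∈ S := (hmem p).mpr (((hmem m).mp hm).tail ⟨hBp, hwp⟩)
      exact (Finset.mem_compl.mp hp) this
  have hin0 : ∑ m ∈ S, ∑ p ∈ Sᶜ, B p m * w m = 0 := by
    have e1 := hsplit (fun m p => B p m * w m)
    have e2 := hsplit (fun m p => B m p * w p)
    rw [e1, e2, hout0, add_zero, hdiagS] at hmain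
    linarith
  by_cases hjS : j ∈ S
  · exact Relation.ReflTransGen.mono (fun a b (hab : 0 < B a b ∧ 0 < w b) => hab.1) k j ((hmem j).mp hjS)
  · exfalso
    have hterm : B j k * w k = 0 := by
      have h1 := (Finset.sum_eq_zero_iff_of_nonneg
        (fun m _ => Finset.sum_nonneg fun p _ => mul_nonneg (hB p m) (hw0 m))).mp hin0 k hkS
      exact (Finset.sum_eq_zero_iff_of_nonneg
        (fun p _ => mul_nonneg (hB p k) (hw0 k))).mp h1 j (Finset.mem_compl.mpr hjS)
    exact (mul_pos hjk hk).ne' hterm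

lemma ker_pos_of_reaches (B : Matrix (Fin n) (Fin n) ℝ) (hB : ∀ i j, 0 ≤ B i j)
    (w : Fin n → ℝ) (hw0 : ∀ i, 0 ≤ w i) (hker : (inLap B).mulVec w = 0)
    {k : Fin n} (hk : 0 < w k) :
    ∀ j, Relation.ReflTransGen (fun a b => 0 < B a b) j k → 0 < w j := by
  intro j hj
  induction hj using Relation.ReflTransGen.head_induction_on with
  | refl => exact hk
  | head hab h ih => exact ker_pos_step B hB w hw0 hker hab ih

lemma vF_pos_iff (B : Matrix (Fin n) (Fin n) ℝ) (hB : ∀ i j, 0 ≤ B i j)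
    (g : Fin n → ℝ) {i : Fin n} (hd : indeg B i ≠ 0) :
    0 < vF B g i ↔ 0 < indeg B i - (inLap B)ᵀ.mulVec g i := by
  have hdpos : 0 < indeg B i := lt_of_le_of_ne (indeg_nonneg' B hB i) (Ne.symm hd)
  rw [vF, if_neg hd]
  have hsum : ∑ k, B k i * (g i - g k) = (inLap B)ᵀ.mulVec g i := by
    rw [mulVec_inLapT, indeg, Finset.sum_mul, ← Finset.sum_sub_distrib]
    exact Finset.sum_congr rfl fun k _ => by ring
  rw [hsum, sub_pos, div_lt_one hdpos]
  exact sub_pos.symm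

lemma source_back (B : Matrix (Fin n) (Fin n) ℝ) (hB : ∀ i j, 0 ≤ B i j)
    (g : Fin n → ℝ) (hg : IsFHL B g) {i : Fin n} (hv : 0 < vF B g i) :
    ∀ j, Relation.ReflTransGen (fun a b => 0 < B a b) j i →
      Relation.ReflTransGen (fun a b => 0 < B a b) i j := by
  by_cases hd : indeg B i = 0
  · intro j hj
    rcases Relation.ReflTransGen.cases_tail hj with h | ⟨c, _, hc⟩
    · rw [h]
    · exfalso
      have h0 : B c i = 0 :=
        (Finset.sum_eq_zero_iff_of_nonneg (fun m _ => hB m i)).mp hd c (Finset.mem_univ c)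
      exact hc.ne' h0
  · set r : Fin n → ℝ := fun m => indeg B m - (inLap B)ᵀ.mulVec g m with hr
    have hri : 0 < r i := (vF_pos_iff B hB g hd).mp hv
    have hker : (inLap B).mulVec r = 0 := ker_resid B g hg
    have hrnn : ∀ m, 0 ≤ r m := resid_nonneg B hB g hg
    intro j hj
    induction hj using Relation.ReflTransGen.head_induction_on with
    | refl => exact .refl
    | @head a c hab h ih =>
      have hc : 0 < r c := ker_pos_of_reaches B hB r hrnn hker hri c h
      exact ih.trans (ker_circulation B hB r hrnn hker hab hc)

lemma reaches_transpose (B : Matrix (Fin n) (Fin n) ℝ) {a b : Fin n} :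
    Relation.ReflTransGen (fun i j => 0 < Bᵀ i j) a b ↔
      Relation.ReflTransGen (fun i j => 0 < B i j) b a := by
  constructor
  · intro h
    induction h with
    | refl => exact .refl
    | tail h' e ih => exact Relation.ReflTransGen.head e ih
  · intro h
    induction h with
    | refl => exact .refl
    | tail h' e ih => exact Relation.ReflTransGen.head e ih

lemma exists_edge (B : Matrix (Fin n) (Fin n) ℝ) (hB : ∀ i j, 0 ≤ B i j)
    (hW : 0 < ∑ i, ∑ j, B i j) : ∃ a b, 0 < B a b := by
  by_contra h
  push_neg at h
  have h0 : ∀ a b, B a b = 0 := fun a b => le_antisymm (h a b) (hB a b)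
  simp [h0] at hW

lemma indeg_pos_of_sc (B : Matrix (Fin n) (Fin n) ℝ) (hB : ∀ i j, 0 ≤ B i j)
    (hdiag : ∀ i, B i i = 0)
    (hsc : ∀ i j, Relation.ReflTransGen (fun a b => 0 < B a b) i j)
    {a b : Fin n} (hab : 0 < B a b) (i : Fin n) : 0 < indeg B i := by
  have hne : a ≠ b := fun h => by rw [h, hdiag] at hab; exact lt_irrefl 0 hab
  obtain ⟨c, hc⟩ : ∃ c, 0 < B c i := by
    by_cases hia : i = a
    · rcases (hsc b i).cases_tail with h | ⟨c, _, hc⟩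
      · exact absurd (hia.symm.trans h) hne
      · exact ⟨c, hc⟩
    · rcases (hsc a i).cases_tail with h | ⟨c, _, hc⟩
      · exact absurd h hia
      · exact ⟨c, hc⟩
  exact lt_of_lt_of_le hc (Finset.single_le_sum (fun m _ => hB m i) (Finset.mem_univ c))

lemma exists_ker (hn : 0 < n) (B : Matrix (Fin n) (Fin n) ℝ) :
    ∃ x : Fin n → ℝ, x ≠ 0 ∧ (inLap B).mulVec x = 0 := by
  have h1 : (inLap B)ᵀ.mulVec (fun _ => 1) = 0 := by
    funext i
    rw [mulVec_inLapT]
    simp [indeg]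
  have hdet : (inLap B)ᵀ.det = 0 := by
    rw [← Matrix.exists_mulVec_eq_zero_iff]
    refine ⟨fun _ => 1, ?_, h1⟩
    intro h
    have := congrFun h ⟨0, hn⟩
    simp at this
  have hdet2 : (inLap B).det = 0 := by rwa [Matrix.det_transpose] at hdet
  rw [← Matrix.exists_mulVec_eq_zero_iff] at hdet2
  obtain ⟨v, hv, hv0⟩ := hdet2
  exact ⟨v, hv, hv0⟩

lemma vF_pos_of_sc (hn : 0 < n) (B : Matrix (Fin n) (Fin n) ℝ)
    (hB : ∀ i j, 0 ≤ B i j) (hdiag : ∀ i, B i i = 0)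
    (hsc : ∀ i j, Relation.ReflTransGen (fun a b => 0 < B a b) i j)
    (hW : 0 < ∑ i, ∑ j, B i j) (g : Fin n → ℝ) (hg : IsFHL B g) (i : Fin n) :
    0 < vF B g i := by
  obtain ⟨a, b, hab⟩ := exists_edge B hB hW
  have hd : ∀ m, 0 < indeg B m := fun m => indeg_pos_of_sc B hB hdiag hsc hab m
  obtain ⟨x, hx, hxker⟩ := exists_ker hn B
  set w : Fin n → ℝ := fun m => |x m| with hw
  have hwker : (inLap B).mulVec w = 0 := ker_abs B hB x hxker
  have hwnn : ∀ m, 0 ≤ w m := fun m => abs_nonneg _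
  obtain ⟨k, hk⟩ : ∃ k, x k ≠ 0 := Function.ne_iff.mp hx
  have hwk : 0 < w k := abs_pos.mpr hk
  have hwpos : ∀ m, 0 < w m :=
    fun m => ker_pos_of_reaches B hB w hwnn hwker hwk m (hsc m k)
  set r : Fin n → ℝ := fun m => indeg B m - (inLap B)ᵀ.mulVec g m with hr
  have hker : (inLap B).mulVec r = 0 := ker_resid B g hg
  have hrnn : ∀ m, 0 ≤ r m := resid_nonneg B hB g hg
  have hrne : ∃ m, 0 < r m := by
    by_contra h
    push_neg at h
    have hrz : ∀ m, r m = 0 := fun m => le_antisymm (h m) (hrnn m)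
    have horth := orth_resid B g w hwker
    have hz : ∑ m, indeg B m * w m = 0 := by
      rw [← horth]
      refine Finset.sum_congr rfl fun m _ => ?_
      have h5 : indeg B m - (inLap B)ᵀ.mulVec g m = 0 := hrz m
      have h6 : (inLap B)ᵀ.mulVec g m = indeg B m := by linarith
      rw [h6]
    have hpos : 0 < ∑ m, indeg B m * w m :=
      Finset.sum_pos (fun m _ => mul_pos (hd m) (hwpos m)) ⟨⟨0, hn⟩, Finset.mem_univ _⟩
    linarith
  obtain ⟨m, hm⟩ := hrne
  have hri : 0 < r i := ker_pos_of_reaches B hB r hrnn hker hm i (hsc i m)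
  exact (vF_pos_iff B hB g (hd i).ne').mpr hri

end Stmt17Aux

theorem stmt_17 (hn : 0 < n) (A : Matrix (Fin n) (Fin n) ℝ)
    (hA : ∀ i j, 0 ≤ A i j) (hdiag : ∀ i, A i i = 0)
    (hwc : WeaklyConnected A) (hW : 0 < totalWeight A)
    (g γ : Fin n → ℝ) (hg : IsFHL A g) (hγ : IsFHL Aᵀ γ) :
    (∃ i : Fin n, 0 < vF A g i ∧ 0 < vF Aᵀ γ i) ↔ StronglyConnected A := by
  constructor
  · rintro ⟨i, hvf, hvb⟩
    have hAT : ∀ i j, 0 ≤ Aᵀ i j := fun i j => hA j i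
    have claim1 : ∀ j, Reaches A j i → Reaches A i j := source_back A hA g hg hvf
    have claim2' := source_back Aᵀ hAT γ hγ hvb
    have claim2 : ∀ j, Reaches A i j → Reaches A j i := by
      intro j h
      exact (reaches_transpose A).mp (claim2' j ((reaches_transpose A).mpr h))
    have claim3 : ∀ m, Reaches A i m := by
      intro m
      have h := hwc i m
      induction h with
      | refl => exact .refl
      | tail h' e ih =>
        rcases e with e | e
        · exact ih.tail e
        · refine claim1 _ (Relation.ReflTransGen.trans ?_ (claim2 _ ih))
          exact Relation.ReflTransGen.single e
    intro j k
    exact (claim2 j (claim3 j)).trans (claim3 k)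
  · intro hsc
    refine ⟨⟨0, hn⟩, ?_, ?_⟩
    · exact vF_pos_of_sc hn A hA hdiag hsc hW g hg _
    · have hAT : ∀ i j, 0 ≤ Aᵀ i j := fun i j => hA j i
      have hdT : ∀ i, Aᵀ i i = 0 := fun i => hdiag i
      have hscT : ∀ i j, Relation.ReflTransGen (fun a b => 0 < Aᵀ a b) i j :=
        fun i j => (reaches_transpose A).mpr (hsc j i)
      have hWT : 0 < ∑ i, ∑ j, Aᵀ i j := by
        have he : ∑ i, ∑ j, Aᵀ i j = ∑ i, ∑ j, A i j := Finset.sum_comm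
        rw [he]; exact hW
      exact vF_pos_of_sc hn Aᵀ hAT hdT hscT hWT γ hγ _
end
end
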